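/- Let k ≥ 2 and n ≥ 1 be integers. If F is a k-town family of vectors in (ℤ/kℤ)^n, then |F| ≤ k^{n/2}. -/

import Mathlib

open Finset

/-- Key counting lemma: if `H` is a self-orthogonal additive subgroup of `(ZMod k)^n`,
then `|H|^2 ≤ k^n`. -/
lemma town_key {k n : ℕ} (hk : 2 ≤ k) (H : AddSubgroup (Fin n → ZMod k))
    (horth : ∀ x ∈ H, ∀ y ∈ H, ∑ r, x r * y r = 0) :
    Nat.card H * Nat.card H ≤ k ^ n := by
  classical
  haveI : NeZero k := ⟨by omega⟩
  -- the orthogonal complement of H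
  let K : AddSubgroup (Fin n → ZMod k) :=
    { carrier := {x | ∀ y ∈ H, ∑ r, x r * y r = 0}
      zero_mem' := by
        intro y hy
        simp only [Set.mem_setOf_eq, Pi.zero_apply, zero_mul, Finset.sum_const_zero]
      add_mem' := by
        intro a b ha hb y hy
        simp only [Pi.add_apply, add_mul, Finset.sum_add_distrib]
        rw [ha y hy, hb y hy, add_zero]
      neg_mem' := by
        intro a ha y hy
        simp only [Pi.neg_apply, neg_mul, Finset.sum_neg_distrib, ha y hy, neg_zero] }
  have hHK : H ≤ K := fun x hx => fun y hy => horth x hx y hy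
  -- a primitive k-th root of unity in ℂˣ
  obtain ⟨ζ, hζ⟩ : ∃ ζ : ℂ, IsPrimitiveRoot ζ k :=
    ⟨_, Complex.isPrimitiveRoot_exp k (NeZero.ne k)⟩
  have hζu : IsUnit ζ := hζ.isUnit (NeZero.ne k)
  have hupow : hζu.unit ^ k = 1 := Units.ext (by simpa using hζ.pow_eq_one)
  let ψ : AddChar (ZMod k) ℂˣ := AddChar.zmodChar k hupow
  have hψ0 : ∀ a : ZMod k, ψ a = 1 → a = 0 := by
    intro a ha
    have h1 : ζ ^ a.val = 1 := by
      have := congrArg Units.val ha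
      simpa [ψ, AddChar.zmodChar_apply] using this
    have hdvd : k ∣ a.val := (IsPrimitiveRoot.pow_eq_one_iff_dvd hζ _).mp h1
    have hval : a.val = 0 := Nat.eq_zero_of_dvd_of_lt hdvd (ZMod.val_lt a)
    exact (ZMod.val_eq_zero a).mp hval
  -- for each h ∈ H, a character of (Fin n → ZMod k) trivial on K
  let Φdef : ∀ h : Fin n → ZMod k, h ∈ H → ((Fin n → ZMod k) →+ Additive ℂˣ) :=
    fun h hh =>
    AddMonoidHom.mk' (fun x => Additive.ofMul (ψ (∑ r, x r * h r))) (by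
      intro a b
      have hsum : (∑ r, (a + b) r * h r) = (∑ r, a r * h r) + ∑ r, b r * h r := by
        simp [add_mul, Finset.sum_add_distrib]
      show Additive.ofMul (ψ (∑ r, (a + b) r * h r))
        = Additive.ofMul (ψ (∑ r, a r * h r)) + Additive.ofMul (ψ (∑ r, b r * h r))
      rw [hsum, AddChar.map_add_eq_mul]
      rfl)
  have Φapply : ∀ (h : Fin n → ZMod k) (hh : h ∈ H) (x : Fin n → ZMod k),
      Φdef h hh x = Additive.ofMul (ψ (∑ r, x r * h r)) := fun _ _ _ => rfl
  -- descend to the quotient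
  let Θ : ∀ h : Fin n → ZMod k, h ∈ H →
      ((Fin n → ZMod k) ⧸ K →+ Additive ℂˣ) := fun h hh =>
    QuotientAddGroup.lift K (Φdef h hh) (by
      intro x hx
      rw [AddMonoidHom.mem_ker, Φapply h hh x, hx h hh]
      simp [AddChar.map_zero_eq_one])
  let g : H → (Multiplicative ((Fin n → ZMod k) ⧸ K) →* ℂˣ) := fun h =>
    AddMonoidHom.toMultiplicativeLeft (Θ h.1 h.2)
  have hg : Function.Injective g := by
    intro h₁ h₂ hEq
    have key : ∀ x : Fin n → ZMod k,
        ψ (∑ r, x r * h₁.1 r) = ψ (∑ r, x r * h₂.1 r) := by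
      intro x
      have h5 := congrArg
        (fun m : Multiplicative ((Fin n → ZMod k) ⧸ K) →* ℂˣ =>
          m (Multiplicative.ofAdd ((x : (Fin n → ZMod k) ⧸ K)))) hEq
      simpa [g, Θ, AddMonoidHom.coe_toMultiplicativeLeft, Φapply] using h5
    have key2 : ∀ x : Fin n → ZMod k,
        ∑ r, x r * h₁.1 r = ∑ r, x r * h₂.1 r := by
      intro x
      set a := ∑ r, x r * h₁.1 r with ha'
      set b := ∑ r, x r * h₂.1 r with hb'
      have hab : ψ (a - b) * ψ b = ψ a := by
        rw [← AddChar.map_add_eq_mul, sub_add_cancel]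
      have hone : ψ (a - b) = 1 := by
        have hba : ψ (a - b) * ψ b = 1 * ψ b := by rw [hab, key x, one_mul]
        exact mul_right_cancel hba
      exact sub_eq_zero.mp (hψ0 _ hone)
    have hcomp : h₁.1 = h₂.1 := by
      funext r
      have := key2 (Pi.single r 1)
      simpa [Pi.single_apply, ite_mul, Finset.sum_ite_eq'] using this
    exact Subtype.ext hcomp
  -- duality: the character group of the quotient has the same cardinality
  haveI : Finite ((Fin n → ZMod k) ⧸ K) := Quotient.finite _
  haveI : NeZero ((Monoid.exponent (Multiplicative ((Fin n → ZMod k) ⧸ K)) : ℂ)) :=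
    ⟨Nat.cast_ne_zero.mpr Monoid.exponent_ne_zero_of_finite⟩
  obtain ⟨e⟩ := CommGroup.monoidHom_mulEquiv_of_hasEnoughRootsOfUnity
    (Multiplicative ((Fin n → ZMod k) ⧸ K)) ℂ
  haveI : Finite (Multiplicative ((Fin n → ZMod k) ⧸ K) →* ℂˣ) :=
    Finite.of_equiv _ e.toEquiv.symm
  have hdualcard : Nat.card (Multiplicative ((Fin n → ZMod k) ⧸ K) →* ℂˣ)
      = Nat.card ((Fin n → ZMod k) ⧸ K) :=
    Nat.card_congr e.toEquiv
  have h1 : Nat.card H ≤ Nat.card ((Fin n → ZMod k) ⧸ K) := by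
    rw [← hdualcard]
    exact Nat.card_le_card_of_injective g hg
  have h2 : Nat.card H ≤ Nat.card K := AddSubgroup.card_le_of_le hHK
  have h3 : Nat.card ((Fin n → ZMod k) ⧸ K) * Nat.card K
      = Nat.card (Fin n → ZMod k) :=
    (AddSubgroup.card_eq_card_quotient_mul_card_addSubgroup K).symm
  have h4 : Nat.card (Fin n → ZMod k) = k ^ n := by
    simp [Nat.card_eq_fintype_card, ZMod.card]
  calc Nat.card H * Nat.card H ≤ Nat.card ((Fin n → ZMod k) ⧸ K) * Nat.card K :=
        Nat.mul_le_mul h1 h2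
    _ = k ^ n := by rw [h3, h4]

/-- `k`-town theorem: if `F ⊆ (ℤ/kℤ)^n` is a family with all pairwise (including self)
scalar products equal to `0` in `ℤ/kℤ`, then `|F| ≤ k^(n/2)`. -/
theorem stmt_7 {k n : ℕ} (hk : 2 ≤ k) (hn : 1 ≤ n)
    (F : Finset (Fin n → ZMod k))
    (hF : ∀ f₁ ∈ F, ∀ f₂ ∈ F, ∑ r, f₁ r * f₂ r = 0) :
    (F.card : ℝ) ≤ (k : ℝ) ^ ((n : ℝ) / 2) := by
  classical
  haveI : NeZero k := ⟨by omega⟩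
  set H : AddSubgroup (Fin n → ZMod k) :=
    AddSubgroup.closure (F : Set (Fin n → ZMod k)) with hHdef
  -- the closure is still self-orthogonal
  have step1 : ∀ f ∈ F, ∀ y ∈ H, ∑ r, f r * y r = 0 := by
    intro f hf y hy
    induction hy using AddSubgroup.closure_induction with
    | mem x hx => exact hF f hf x hx
    | zero => simp
    | add x y hx hy ihx ihy =>
        simp only [Pi.add_apply, mul_add, Finset.sum_add_distrib, ihx, ihy, add_zero]
    | neg x hx ihx =>
        simp only [Pi.neg_apply, mul_neg, Finset.sum_neg_distrib, ihx, neg_zero]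
  have horth : ∀ x ∈ H, ∀ y ∈ H, ∑ r, x r * y r = 0 := by
    intro x hx y hy
    induction hx using AddSubgroup.closure_induction with
    | mem z hz => exact step1 z hz y hy
    | zero => simp
    | add a b ha hb iha ihb =>
        simp only [Pi.add_apply, add_mul, Finset.sum_add_distrib, iha, ihb, add_zero]
    | neg a ha iha =>
        simp only [Pi.neg_apply, neg_mul, Finset.sum_neg_distrib, iha, neg_zero]
  have hkey : Nat.card H * Nat.card H ≤ k ^ n := town_key hk H horth
  have hFH : F.card ≤ Nat.card H := by
    have hsub : F ⊆ (H : Set (Fin n → ZMod k)).toFinset := by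
      intro f hf
      exact Set.mem_toFinset.mpr (AddSubgroup.subset_closure hf)
    calc F.card ≤ (H : Set (Fin n → ZMod k)).toFinset.card :=
          Finset.card_le_card hsub
      _ = Nat.card H := by rw [Set.toFinset_card, Nat.card_eq_fintype_card]; rfl
  have hsq : (F.card : ℝ) ^ 2 ≤ (k : ℝ) ^ n := by
    have h6 : F.card * F.card ≤ k ^ n :=
      le_trans (Nat.mul_le_mul hFH hFH) hkey
    have h7 := (Nat.cast_le (α := ℝ)).mpr h6
    push_cast at h7
    nlinarith [h7]
  have hrw : (k : ℝ) ^ ((n : ℝ) / 2) = Real.sqrt ((k : ℝ) ^ n) := by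
    rw [Real.sqrt_eq_rpow, ← Real.rpow_natCast (k : ℝ) n, ← Real.rpow_mul (by positivity)]
    ring_nf
  rw [hrw]
  exact (Real.le_sqrt (by positivity) (by positivity)).mpr hsq
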